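/- Let F = a x^r y^{s+α} + b x^{r+α} y^s with a,b ∈ ℂ nonzero, 0 ≤ r ≤ s, α ≥ 1, and suppose s ≥ r + α. Then the Waring rank of F equals s + 1. -/

import Mathlib

open MvPolynomial

noncomputable def lin (c : ℂ × ℂ) : MvPolynomial (Fin 2) ℂ :=
  C c.1 * X 0 + C c.2 * X 1

noncomputable def waringRank (d : ℕ) (F : MvPolynomial (Fin 2) ℂ) : ℕ :=
  sInf {r | ∃ (a : Fin r → ℂ) (c : Fin r → ℂ × ℂ), F = ∑ i, C (a i) * lin (c i) ^ d}

lemma fin2_finsupp (ξ : Fin 2 →₀ ℕ) :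
    ξ = Finsupp.single 0 (ξ 0) + Finsupp.single 1 (ξ 1) := by
  ext i; fin_cases i <;> simp [Finsupp.single_apply]

lemma pair_eq_iff (m n m' n' : ℕ) :
    (Finsupp.single (0 : Fin 2) m + Finsupp.single 1 n
      = Finsupp.single 0 m' + Finsupp.single 1 n') ↔ m = m' ∧ n = n' := by
  constructor
  · intro hEq
    constructor
    · have := DFunLike.congr_fun hEq (0 : Fin 2); simpa [Finsupp.single_apply] using this
    · have := DFunLike.congr_fun hEq (1 : Fin 2); simpa [Finsupp.single_apply] using this
  · rintro ⟨rfl, rfl⟩; rfl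

lemma lin_pow_eq (c : ℂ × ℂ) (N : ℕ) :
    lin c ^ N = ∑ k ∈ Finset.range (N + 1),
      monomial (Finsupp.single 0 k + Finsupp.single 1 (N - k))
        ((N.choose k : ℂ) * c.1 ^ k * c.2 ^ (N - k)) := by
  rw [lin, add_pow]
  refine Finset.sum_congr rfl fun k _ => ?_
  rw [mul_pow, mul_pow, ← C_pow, ← C_pow, X_pow_eq_monomial, X_pow_eq_monomial,
    C_mul_monomial, C_mul_monomial, monomial_mul]
  have : ((N.choose k : ℕ) : MvPolynomial (Fin 2) ℂ) = C ((N.choose k : ℕ) : ℂ) := by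
    simp
  rw [this, mul_comm _ (C ((N.choose k : ℕ) : ℂ)), C_mul_monomial]
  ring_nf

lemma coeff_lin_pow' (c : ℂ × ℂ) (N m n : ℕ) :
    coeff (Finsupp.single 0 m + Finsupp.single 1 n) (lin c ^ N)
      = if m + n = N then (N.choose m : ℂ) * c.1 ^ m * c.2 ^ n else 0 := by
  rw [lin_pow_eq, MvPolynomial.coeff_sum]
  simp only [coeff_monomial, pair_eq_iff]
  by_cases hmn : m + n = N
  · rw [Finset.sum_eq_single m]
    · rw [if_pos ⟨rfl, by omega⟩, if_pos hmn]
      have hnm : N - m = n := by omega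
      rw [hnm]
    · intro k _ hk
      rw [if_neg (by tauto)]
    · intro hm
      exact absurd (Finset.mem_range.2 (by omega)) hm
  · rw [if_neg hmn, Finset.sum_eq_zero]
    intro k hk
    rw [Finset.mem_range] at hk
    rw [if_neg]
    rintro ⟨rfl, hn⟩
    omega

lemma coeff_lin_pow (c : ℂ × ℂ) (N : ℕ) (ξ : Fin 2 →₀ ℕ) :
    coeff ξ (lin c ^ N)
      = if ξ 0 + ξ 1 = N then (N.choose (ξ 0) : ℂ) * c.1 ^ (ξ 0) * c.2 ^ (ξ 1) else 0 := by
  conv_lhs => rw [fin2_finsupp ξ]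
  rw [coeff_lin_pow']

lemma coeff_rep {k d : ℕ} (A : Fin k → ℂ) (cc : Fin k → ℂ × ℂ) (ξ : Fin 2 →₀ ℕ) :
    coeff ξ (∑ i, C (A i) * lin (cc i) ^ d)
      = ∑ i, A i * (if ξ 0 + ξ 1 = d
          then (d.choose (ξ 0) : ℂ) * (cc i).1 ^ (ξ 0) * (cc i).2 ^ (ξ 1) else 0) := by
  rw [MvPolynomial.coeff_sum]
  refine Finset.sum_congr rfl fun i _ => ?_
  rw [coeff_C_mul, coeff_lin_pow]

lemma coeff_F (a b : ℂ) (r s α : ℕ) (ξ : Fin 2 →₀ ℕ) :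
    coeff ξ (C a * X (0 : Fin 2) ^ r * X 1 ^ (s + α) + C b * X (0 : Fin 2) ^ (r + α) * X 1 ^ s)
      = (if ξ 0 = r ∧ ξ 1 = s + α then a else 0)
        + (if ξ 0 = r + α ∧ ξ 1 = s then b else 0) := by
  have h1 : (C a * X (0 : Fin 2) ^ r * X 1 ^ (s + α) : MvPolynomial (Fin 2) ℂ)
      = monomial (Finsupp.single 0 r + Finsupp.single 1 (s + α)) a := by
    rw [mul_assoc, X_pow_eq_monomial, X_pow_eq_monomial, monomial_mul, C_mul_monomial]
    ring_nf
  have h2 : (C b * X (0 : Fin 2) ^ (r + α) * X 1 ^ s : MvPolynomial (Fin 2) ℂ)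
      = monomial (Finsupp.single 0 (r + α) + Finsupp.single 1 s) b := by
    rw [mul_assoc, X_pow_eq_monomial, X_pow_eq_monomial, monomial_mul, C_mul_monomial]
    ring_nf
  rw [h1, h2, coeff_add, coeff_monomial, coeff_monomial]
  conv_lhs => rw [fin2_finsupp ξ]
  simp only [pair_eq_iff]
  congr 1
  · by_cases h : ξ 0 = r ∧ ξ 1 = s + α
    · rw [if_pos ⟨h.1.symm, h.2.symm⟩, if_pos h]
    · rw [if_neg (by tauto), if_neg h]
  · by_cases h : ξ 0 = r + α ∧ ξ 1 = s
    · rw [if_pos ⟨h.1.symm, h.2.symm⟩, if_pos h]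
    · rw [if_neg (by tauto), if_neg h]

open MvPolynomial in
lemma hev_step (a' b' : ℂ) (Q : Polynomial ℂ) (n : ℕ) (hQ : Q.natDegree ≤ n) (u v : ℂ) :
    ∑ j ∈ Finset.range (n + 2),
        ((Polynomial.C b' * Polynomial.X - Polynomial.C a') * Q).coeff j * u ^ j * v ^ (n + 1 - j)
      = (b' * u - a' * v) * ∑ j ∈ Finset.range (n + 1), Q.coeff j * u ^ j * v ^ (n - j) := by
  have hc : ∀ j, ((Polynomial.C b' * Polynomial.X - Polynomial.C a') * Q).coeff j
      = b' * (if j = 0 then 0 else Q.coeff (j - 1)) - a' * Q.coeff j := by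
    intro j
    rw [sub_mul, Polynomial.coeff_sub, mul_assoc, Polynomial.coeff_C_mul,
      Polynomial.coeff_C_mul]
    congr 1
    cases j with
    | zero => simp [Polynomial.mul_coeff_zero]
    | succ i => simp [Polynomial.coeff_X_mul]
  have expand : ∀ j, ((Polynomial.C b' * Polynomial.X - Polynomial.C a') * Q).coeff j * u ^ j * v ^ (n + 1 - j)
      = b' * (if j = 0 then 0 else Q.coeff (j - 1)) * u ^ j * v ^ (n + 1 - j)
        - a' * Q.coeff j * u ^ j * v ^ (n + 1 - j) := by
    intro j; rw [hc]; ring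
  rw [Finset.sum_congr rfl (fun j _ => expand j), Finset.sum_sub_distrib, sub_mul]
  congr 1
  · rw [Finset.sum_range_succ' (fun j => b' * (if j = 0 then 0 else Q.coeff (j-1)) * u ^ j * v ^ (n+1-j)) (n+1)]
    simp only [if_pos rfl, mul_zero, zero_mul, add_zero, Nat.succ_sub_succ,
      Nat.succ_ne_zero, if_false, if_true, Nat.sub_zero]
    rw [Finset.mul_sum]
    exact Finset.sum_congr rfl fun j hj => by rw [pow_succ]; ring
  · rw [Finset.sum_range_succ]
    have hz : Q.coeff (n + 1) = 0 := Polynomial.coeff_eq_zero_of_natDegree_lt (by omega)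
    rw [hz]
    simp only [mul_zero, zero_mul, add_zero]
    rw [Finset.mul_sum]
    refine Finset.sum_congr rfl fun j hj => ?_
    rw [Finset.mem_range] at hj
    have : n + 1 - j = (n - j) + 1 := by omega
    rw [this, pow_succ]
    ring

lemma natDegree_linprod_le {ι : Type*} (S : Finset ι) (f g : ι → ℂ) :
    (∏ i ∈ S, (Polynomial.C (g i) * Polynomial.X - Polynomial.C (f i))).natDegree ≤ S.card := by
  refine le_trans (Polynomial.natDegree_prod_le _ _) ?_
  have : ∀ i ∈ S, (Polynomial.C (g i) * Polynomial.X - Polynomial.C (f i)).natDegree ≤ 1 := by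
    intro i _
    refine le_trans (Polynomial.natDegree_sub_le _ _) ?_
    simp only [max_le_iff]
    constructor
    · exact le_trans (Polynomial.natDegree_C_mul_le _ _) (le_of_eq Polynomial.natDegree_X)
    · simp [Polynomial.natDegree_C]
  have := Finset.sum_le_card_nsmul S _ 1 this
  simpa using this

lemma hev {ι : Type*} [DecidableEq ι] (S : Finset ι) (f g : ι → ℂ) (u v : ℂ) :
    ∑ j ∈ Finset.range (S.card + 1),
        (∏ i ∈ S, (Polynomial.C (g i) * Polynomial.X - Polynomial.C (f i))).coeff j
          * u ^ j * v ^ (S.card - j)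
      = ∏ i ∈ S, (g i * u - f i * v) := by
  induction S using Finset.induction_on with
  | empty => simp
  | @insert i S hi ih =>
    rw [Finset.prod_insert hi, Finset.prod_insert hi, Finset.card_insert_of_notMem hi]
    rw [← ih]
    exact hev_step (f i) (g i) _ S.card (natDegree_linprod_le S f g) u v

open Finset Polynomial in
lemma exists_sep_roots (cf : ℕ → ℂ) (N : ℕ) (hN : 1 ≤ N) (h0 : cf 0 = 1) (hlast : cf N = 0) :
    ∃ (γ : ℂ) (t : Fin N → ℂ), Function.Injective t ∧
      ∀ i, ∑ j ∈ range (N + 1), (if j = N then γ else cf j) * (t i) ^ (N - j) = 0 := by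
  set P0 : Polynomial ℂ := ∑ j ∈ range (N + 1), Polynomial.C (cf j) * Polynomial.X ^ (N - j)
    with hP0
  have hcoeffN : P0.coeff N = 1 := by
    rw [hP0, Polynomial.finset_sum_coeff]
    rw [Finset.sum_eq_single 0]
    · simp [h0]
    · intro j hj hj0
      rw [Finset.mem_range] at hj
      rw [Polynomial.coeff_C_mul, Polynomial.coeff_X_pow, if_neg (by omega), mul_zero]
    · intro hcon
      exact absurd (Finset.mem_range.2 (by omega)) hcon
  have hdeg_le : P0.natDegree ≤ N := by
    refine Polynomial.natDegree_sum_le_of_forall_le _ _ fun j hj => ?_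
    exact le_trans (Polynomial.natDegree_C_mul_le _ _)
      (le_trans (Polynomial.natDegree_X_pow_le _) (by omega))
  have hP0ne : P0 ≠ 0 := fun hcon => by simp [hcon] at hcoeffN
  have hdeg : P0.natDegree = N :=
    le_antisymm hdeg_le (Polynomial.le_natDegree_of_ne_zero (by rw [hcoeffN]; exact one_ne_zero))
  have hdPne : Polynomial.derivative P0 ≠ 0 := by
    intro hcon
    have := Polynomial.natDegree_eq_zero_of_derivative_eq_zero hcon
    omega
  obtain ⟨γ, hγ⟩ := Infinite.exists_notMem_finset
    (((Polynomial.derivative P0).roots.map (fun z => -P0.eval z)).toFinset)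
  set p : Polynomial ℂ := P0 + Polynomial.C γ with hp
  have hpcoeffN : p.coeff N = 1 := by
    rw [hp, Polynomial.coeff_add, hcoeffN, Polynomial.coeff_C, if_neg (by omega), add_zero]
  have hpne : p ≠ 0 := fun hcon => by simp [hcon] at hpcoeffN
  have hpdeg : p.natDegree = N := by
    refine le_antisymm (le_trans (Polynomial.natDegree_add_le _ _) ?_)
      (Polynomial.le_natDegree_of_ne_zero (by rw [hpcoeffN]; exact one_ne_zero))
    simp [hdeg]
  have hdp : Polynomial.derivative p = Polynomial.derivative P0 := by
    rw [hp, Polynomial.derivative_add, Polynomial.derivative_C, add_zero]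
  have hsep : p.Separable := by
    rw [Polynomial.separable_def, hdp]
    apply EuclideanDomain.isCoprime_of_dvd
    · rintro ⟨h1, -⟩; exact hpne h1
    · intro z hznu hzne hzp hzdp
      have hzdeg : z.degree ≠ 0 := fun hcon =>
        hznu (Polynomial.isUnit_iff_degree_eq_zero.2 hcon)
      obtain ⟨x, hx⟩ := IsAlgClosed.exists_root z hzdeg
      have hpx : p.eval x = 0 := Polynomial.eval_eq_zero_of_dvd_of_eval_eq_zero hzp hx
      have hdpx : (Polynomial.derivative P0).eval x = 0 :=
        Polynomial.eval_eq_zero_of_dvd_of_eval_eq_zero hzdp hx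
      apply hγ
      rw [Multiset.mem_toFinset, Multiset.mem_map]
      refine ⟨x, ?_, ?_⟩
      · rw [Polynomial.mem_roots hdPne]
        exact hdpx
      · have : P0.eval x + γ = 0 := by
          rw [← Polynomial.eval_C (a := γ) (x := x), ← Polynomial.eval_add, ← hp, hpx]
        linear_combination -this
  have hsplits := IsAlgClosed.splits p
  have hcard : Multiset.card p.roots = N := by
    have := hsplits.natDegree_eq_card_roots
    rwa [hpdeg, eq_comm] at this
  have hnodup : p.roots.Nodup := Polynomial.nodup_roots hsep
  have hlen : p.roots.toList.length = N := by rw [Multiset.length_toList, hcard]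
  set t : Fin N → ℂ := fun i => p.roots.toList.get (Fin.cast hlen.symm i) with ht
  have hLnodup : p.roots.toList.Nodup := by
    have := Multiset.coe_toList p.roots
    rw [← this] at hnodup
    exact hnodup
  have htinj : Function.Injective t := by
    intro i j hij
    have := List.nodup_iff_injective_get.1 hLnodup hij
    exact Fin.cast_injective _ (by exact this)
  refine ⟨γ, t, htinj, fun i => ?_⟩
  have hti : p.eval (t i) = 0 := by
    have hmem : t i ∈ p.roots := by
      rw [← Multiset.mem_toList]
      exact List.get_mem _ _
    exact (Polynomial.mem_roots hpne).1 hmem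
  have heval : ∀ x : ℂ, p.eval x = ∑ j ∈ range (N + 1), (if j = N then γ else cf j) * x ^ (N - j) := by
    intro x
    rw [Finset.sum_range_succ, if_pos rfl, Nat.sub_self, pow_zero, mul_one]
    have : ∀ j ∈ range N, (if j = N then γ else cf j) * x ^ (N - j) = cf j * x ^ (N - j) := by
      intro j hj
      rw [Finset.mem_range] at hj
      rw [if_neg (by omega)]
    rw [Finset.sum_congr rfl this]
    rw [hp, Polynomial.eval_add, Polynomial.eval_C, hP0]
    congr 1
    rw [Polynomial.eval_finset_sum, Finset.sum_range_succ, hlast]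
    simp
  rw [← heval, hti]

open Finset in
lemma lower_bound (a b : ℂ) (ha : a ≠ 0) (hb : b ≠ 0) (r s α k : ℕ) (hα : 1 ≤ α)
    (h : r + α ≤ s) (hk : k ≤ s) (A : Fin k → ℂ) (cc : Fin k → ℂ × ℂ)
    (hF : (C a * X (0 : Fin 2) ^ r * X 1 ^ (s + α) + C b * X (0 : Fin 2) ^ (r + α) * X 1 ^ s)
      = ∑ i, C (A i) * lin (cc i) ^ (r + s + α)) : False := by
  set d := r + s + α with hd
  set S : Finset (Fin k) := Finset.univ.filter (fun i => (cc i).1 ≠ 0) with hS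
  set n : ℕ := S.card with hn
  have hnk : n ≤ k := le_trans (Finset.card_filter_le _ _) (by simp)
  have hns : n ≤ s := le_trans hnk hk
  set Q : Polynomial ℂ :=
    ∏ i ∈ S, (Polynomial.C (cc i).2 * Polynomial.X - Polynomial.C (cc i).1) with hQ
  -- coefficient equations
  have key : ∀ m : ℕ, m ≤ d →
      ((if m = r then a else 0) + (if m = r + α then b else 0))
        = ∑ i, A i * ((d.choose m : ℂ) * (cc i).1 ^ m * (cc i).2 ^ (d - m)) := by
    intro m hm
    have := congrArg (coeff (Finsupp.single 0 m + Finsupp.single 1 (d - m))) hF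
    rw [coeff_F, coeff_rep] at this
    have e0 : (Finsupp.single (0 : Fin 2) m + Finsupp.single 1 (d - m) : Fin 2 →₀ ℕ) 0 = m := by
      simp [Finsupp.single_apply]
    have e1 : (Finsupp.single (0 : Fin 2) m + Finsupp.single 1 (d - m) : Fin 2 →₀ ℕ) 1 = d - m := by
      simp [Finsupp.single_apply]
    rw [e0, e1] at this
    have hsum : m + (d - m) = d := by omega
    simp only [hsum, if_pos rfl] at this
    have c1 : (if m = r ∧ d - m = s + α then a else 0) = (if m = r then a else 0) := by
      by_cases hmr : m = r
      · rw [if_pos ⟨hmr, by omega⟩, if_pos hmr]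
      · rw [if_neg (by tauto), if_neg hmr]
    have c2 : (if m = r + α ∧ d - m = s then b else 0) = (if m = r + α then b else 0) := by
      by_cases hmr : m = r + α
      · rw [if_pos ⟨hmr, by omega⟩, if_pos hmr]
      · rw [if_neg (by tauto), if_neg hmr]
    rw [c1, c2] at this
    exact this
  -- the key sum
  have hchoose : ∀ j, j ≤ n → (d.choose (r + α + j) : ℂ) ≠ 0 := by
    intro j hj
    have : 0 < d.choose (r + α + j) := Nat.choose_pos (by omega)
    exact_mod_cast this.ne'
  have E2 : ∑ j ∈ range (n + 1), Q.coeff j * ((d.choose (r + α + j) : ℂ))⁻¹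
      * ((if r + α + j = r then a else 0) + (if r + α + j = r + α then b else 0)) = 0 := by
    have : ∀ j ∈ range (n + 1), Q.coeff j * ((d.choose (r + α + j) : ℂ))⁻¹
        * ((if r + α + j = r then a else 0) + (if r + α + j = r + α then b else 0))
        = ∑ i, A i * (Q.coeff j * (cc i).1 ^ (r + α + j) * (cc i).2 ^ (d - (r + α + j))) := by
      intro j hj
      rw [Finset.mem_range] at hj
      rw [key (r + α + j) (by omega), Finset.mul_sum]
      refine Finset.sum_congr rfl fun i _ => ?_
      have hcj := hchoose j (by omega)
      field_simp
    rw [Finset.sum_congr rfl this, Finset.sum_comm]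
    rw [Finset.sum_eq_zero]
    intro i _
    by_cases hiS : i ∈ S
    · have hGzero : ∑ j ∈ range (n + 1), Q.coeff j * (cc i).1 ^ j * (cc i).2 ^ (n - j) = 0 := by
        rw [hQ, hn, hev S (fun i' => (cc i').1) (fun i' => (cc i').2) (cc i).1 (cc i).2]
        exact Finset.prod_eq_zero hiS (by ring)
      have : ∀ j ∈ range (n + 1),
          A i * (Q.coeff j * (cc i).1 ^ (r + α + j) * (cc i).2 ^ (d - (r + α + j)))
          = (A i * (cc i).1 ^ (r + α) * (cc i).2 ^ (s - n))
            * (Q.coeff j * (cc i).1 ^ j * (cc i).2 ^ (n - j)) := by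
        intro j hj
        rw [Finset.mem_range] at hj
        have h1 : (cc i).1 ^ (r + α + j) = (cc i).1 ^ (r + α) * (cc i).1 ^ j := pow_add _ _ _
        have h2 : d - (r + α + j) = (n - j) + (s - n) := by omega
        rw [h1, h2, pow_add]
        ring
      rw [Finset.sum_congr rfl this, ← Finset.mul_sum, hGzero, mul_zero]
    · have hz : (cc i).1 = 0 := by
        by_contra hcon
        exact hiS (Finset.mem_filter.2 ⟨Finset.mem_univ i, hcon⟩)
      rw [Finset.sum_eq_zero]
      intro j _
      rw [hz, zero_pow (by omega), mul_zero, zero_mul, mul_zero]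
  -- evaluate E2 directly
  have E1 : ∑ j ∈ range (n + 1), Q.coeff j * ((d.choose (r + α + j) : ℂ))⁻¹
      * ((if r + α + j = r then a else 0) + (if r + α + j = r + α then b else 0))
      = Q.coeff 0 * ((d.choose (r + α) : ℂ))⁻¹ * b := by
    rw [Finset.sum_eq_single 0]
    · rw [if_neg (by omega), if_pos (by omega)]
      norm_num
    · intro j _ hj
      rw [if_neg (by omega), if_neg (by omega)]
      norm_num
    · intro hcon
      exact absurd (Finset.mem_range.2 (by omega)) hcon
  have hQ0 : Q.coeff 0 ≠ 0 := by
    rw [Polynomial.coeff_zero_eq_eval_zero, hQ, Polynomial.eval_prod]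
    rw [Finset.prod_ne_zero_iff]
    intro i hi
    have : (cc i).1 ≠ 0 := (Finset.mem_filter.1 hi).2
    simpa using this
  rw [E1] at E2
  have hci := hchoose 0 (by omega)
  rw [add_zero] at hci
  rcases mul_eq_zero.1 E2 with h1 | h1
  · rcases mul_eq_zero.1 h1 with h2 | h2
    · exact hQ0 h2
    · exact hci (by simpa using h2)
  · exact hb h1

open Finset in
lemma upper_bound (a b : ℂ) (ha : a ≠ 0) (hb : b ≠ 0) (r s α : ℕ) (hα : 1 ≤ α)
    (h : r + α ≤ s) :
    ∃ (A : Fin (s+1) → ℂ) (cc : Fin (s+1) → ℂ × ℂ),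
      (C a * X (0 : Fin 2) ^ r * X 1 ^ (s + α) + C b * X (0 : Fin 2) ^ (r + α) * X 1 ^ s)
        = ∑ i, C (A i) * lin (cc i) ^ (r + s + α) := by
  set d := r + s + α with hd
  have hch : ∀ m, m ≤ d → (d.choose m : ℂ) ≠ 0 := by
    intro m hm
    have : 0 < d.choose m := Nat.choose_pos hm
    exact_mod_cast this.ne'
  set An : ℂ := a / (d.choose r : ℂ) with hAn
  set Bn : ℂ := b / (d.choose (r+α) : ℂ) with hBn
  have hAne : An ≠ 0 := div_ne_zero ha (hch r (by omega))
  have hBne : Bn ≠ 0 := div_ne_zero hb (hch (r+α) (by omega))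
  set ρ : ℂ := -An / Bn with hρ
  have hρB : ρ * Bn = -An := div_mul_cancel₀ _ hBne
  set c0 : ℕ → ℂ := fun j => if α ∣ j ∧ j ≤ r + α then ρ ^ (j / α) else 0 with hc0
  have hc00 : c0 0 = 1 := by
    rw [hc0]
    simp
  have hc0last : c0 (s+1) = 0 := by
    rw [hc0]
    exact if_neg (fun hcon => by omega)
  obtain ⟨γ, t, htinj, htroot⟩ := exists_sep_roots c0 (s+1) (by omega) hc00 hc0last
  set c : ℕ → ℂ := fun j => if j = s+1 then γ else c0 j with hc
  have hcc0 : c 0 = 1 := by rw [hc]; simp [hc00]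
  set w : ℕ → ℂ := fun m => if m = r then An else if m = r + α then Bn else 0 with hw
  have wsplit : ∀ m, w m = (if m = r then An else 0) + (if m = r + α then Bn else 0) := by
    intro m
    simp only [hw]
    by_cases h1 : m = r
    · rw [if_pos h1, if_pos h1, if_neg (by omega), add_zero]
    · rw [if_neg h1, if_neg h1, zero_add]
  -- Claim W : the recurrence for the coefficient moments
  have claimW : ∀ m0, m0 < r + α → ∑ j ∈ range (s+2), c j * w (m0 + j) = 0 := by
    intro m0 hm0
    have expand : ∀ j ∈ range (s+2), c j * w (m0 + j)
        = c j * (if m0 + j = r then An else 0) + c j * (if m0 + j = r + α then Bn else 0) := by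
      intro j _
      rw [wsplit (m0 + j), mul_add]
    rw [Finset.sum_congr rfl expand, Finset.sum_add_distrib]
    have hS2 : ∑ j ∈ range (s+2), c j * (if m0 + j = r + α then Bn else 0)
        = c (r + α - m0) * Bn := by
      rw [Finset.sum_eq_single (r + α - m0)]
      · rw [if_pos (by omega)]
      · intro j _ hj
        rw [if_neg (by omega), mul_zero]
      · intro hcon
        exact absurd (Finset.mem_range.2 (by omega)) hcon
    by_cases hm0r : m0 ≤ r
    · have hS1 : ∑ j ∈ range (s+2), c j * (if m0 + j = r then An else 0)
          = c (r - m0) * An := by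
        rw [Finset.sum_eq_single (r - m0)]
        · rw [if_pos (by omega)]
        · intro j _ hj
          rw [if_neg (by omega), mul_zero]
        · intro hcon
          exact absurd (Finset.mem_range.2 (by omega)) hcon
      rw [hS1, hS2]
      by_cases hdvd : α ∣ (r + α - m0)
      · obtain ⟨k, hk⟩ := hdvd
        obtain ⟨k', rfl⟩ : ∃ k', k = k' + 1 := by
          refine ⟨k - 1, ?_⟩
          rcases Nat.eq_zero_or_pos k with rfl | h1
          · omega
          · omega
        have hdist : α * (k' + 1) = α * k' + α := by ring
        have e1 : c (r + α - m0) = ρ ^ (k' + 1) := by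
          simp only [hc, hc0]
          rw [if_neg (by omega), if_pos ⟨⟨k' + 1, hk⟩, by omega⟩]
          congr 1
          rw [hk, Nat.mul_div_cancel_left _ (show 0 < α by omega)]
        have e2 : c (r - m0) = ρ ^ k' := by
          simp only [hc, hc0]
          rw [if_neg (by omega), if_pos ⟨⟨k', by omega⟩, by omega⟩]
          congr 1
          rw [show r - m0 = α * k' by omega, Nat.mul_div_cancel_left _ (show 0 < α by omega)]
        rw [e1, e2]
        have hrw : ρ ^ (k' + 1) = ρ ^ k' * ρ := pow_succ _ _
        rw [hrw]
        have : ρ ^ k' * An + ρ ^ k' * ρ * Bn = ρ ^ k' * (An + ρ * Bn) := by ring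
        rw [this, hρB]
        simp
      · have e1 : c (r + α - m0) = 0 := by
          simp only [hc, hc0]
          rw [if_neg (by omega), if_neg (by tauto)]
        have e2 : c (r - m0) = 0 := by
          simp only [hc, hc0]
          rw [if_neg (by omega), if_neg]
          rintro ⟨⟨k, hk⟩, -⟩
          refine hdvd ⟨k + 1, ?_⟩
          have : α * (k + 1) = α * k + α := by ring
          omega
        rw [e1, e2]
        ring
    · have hS1 : ∑ j ∈ range (s+2), c j * (if m0 + j = r then An else 0) = 0 := by
        apply Finset.sum_eq_zero
        intro j _
        rw [if_neg (by omega), mul_zero]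
      rw [hS1, hS2]
      have e1 : c (r + α - m0) = 0 := by
        simp only [hc, hc0]
        rw [if_neg (by omega), if_neg]
        rintro ⟨⟨k, hk⟩, -⟩
        rcases k with _ | k'
        · omega
        · have : α * (k' + 1) = α * k' + α := by ring
          omega
      rw [e1]
      ring
  have htroot2 : ∀ i, ∑ j ∈ range (s+2), c j * t i ^ (s+1-j) = 0 := by
    intro i
    have h0 := htroot i
    rw [show s+1+1 = s+2 from rfl] at h0
    simpa only [hc] using h0
  have hcth : ∀ (i : Fin (s+1)) (q : ℕ),
      t i ^ (q + s + 1) = -∑ j ∈ range (s+1), c (j+1) * t i ^ (q + (s - j)) := by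
    intro i q
    have h0 := htroot2 i
    rw [Finset.sum_range_succ'] at h0
    rw [hcc0, one_mul] at h0
    have hre : ∀ j ∈ range (s+1), c (j+1) * t i ^ (s+1-(j+1)) = c (j+1) * t i ^ (s-j) := by
      intro j hj
      rw [show s+1-(j+1) = s - j from by omega]
    rw [Finset.sum_congr rfl hre] at h0
    have hpow : t i ^ (s+1) = -∑ j ∈ range (s+1), c (j+1) * t i ^ (s - j) := by
      rw [show s + 1 - 0 = s+1 from by omega] at h0
      linear_combination h0
    calc t i ^ (q + s + 1) = t i ^ q * t i ^ (s+1) := by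
          rw [← pow_add]
          try congr 1
          try omega
      _ = t i ^ q * (-∑ j ∈ range (s+1), c (j+1) * t i ^ (s - j)) := by rw [hpow]
      _ = -∑ j ∈ range (s+1), c (j+1) * t i ^ (q + (s - j)) := by
          rw [mul_neg, Finset.mul_sum]
          congr 1
          refine Finset.sum_congr rfl fun j hj => ?_
          rw [pow_add]
          ring
  set V : Matrix (Fin (s+1)) (Fin (s+1)) ℂ := Matrix.transpose (Matrix.vandermonde t) with hV
  have hVe : ∀ (e i : Fin (s+1)), V e i = t i ^ (e : ℕ) := by
    intro e i
    rw [hV, Matrix.transpose_apply, Matrix.vandermonde_apply]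
  have hdet : V.det ≠ 0 := by
    rw [hV, Matrix.det_transpose]
    exact Matrix.det_vandermonde_ne_zero_iff.2 htinj
  set wv : Fin (s+1) → ℂ := fun e => w (d - (e : ℕ)) with hwv
  set lam : Fin (s+1) → ℂ := V⁻¹.mulVec wv with hlam
  have hVl : V.mulVec lam = wv := by
    rw [hlam, Matrix.mulVec_mulVec, Matrix.mul_nonsing_inv _ (isUnit_iff_ne_zero.2 hdet),
      Matrix.one_mulVec]
  set M : ℕ → ℂ := fun e => ∑ i, lam i * t i ^ e with hM
  have hMlow : ∀ e : ℕ, e ≤ s → M e = w (d - e) := by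
    intro e he
    have h0 := congrFun hVl ⟨e, by omega⟩
    simp only [Matrix.mulVec, dotProduct, hV, Matrix.transpose_apply,
      Matrix.vandermonde_apply, hwv] at h0
    simp only [hM]
    rw [← h0]
    refine Finset.sum_congr rfl fun i _ => mul_comm _ _
  have hrecM : ∀ q : ℕ, M (q + s + 1) = -∑ j ∈ range (s+1), c (j+1) * M (q + (s-j)) := by
    intro q
    simp only [hM]
    have h2 : ∑ i : Fin (s+1), lam i * t i ^ (q+s+1)
        = ∑ i : Fin (s+1), ∑ j ∈ range (s+1), -(c (j+1) * (lam i * t i ^ (q+(s-j)))) := by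
      refine Finset.sum_congr rfl fun i _ => ?_
      rw [hcth i q, mul_neg, Finset.mul_sum, ← Finset.sum_neg_distrib]
      refine Finset.sum_congr rfl fun j _ => by ring
    rw [h2, Finset.sum_comm, ← Finset.sum_neg_distrib]
    refine Finset.sum_congr rfl fun j _ => ?_
    rw [Finset.mul_sum, ← Finset.sum_neg_distrib]
    try refine Finset.sum_congr rfl fun i _ => by ring
  have hrecw : ∀ q : ℕ, q < r + α →
      w (d - (q+s+1)) = -∑ j ∈ range (s+1), c (j+1) * w (d - (q + (s-j))) := by
    intro q hq
    have h0 := claimW (d - (q+s+1)) (by omega)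
    rw [Finset.sum_range_succ'] at h0
    rw [hcc0, one_mul, add_zero] at h0
    have hre : ∀ j ∈ range (s+1), c (j+1) * w (d - (q+s+1) + (j+1))
        = c (j+1) * w (d - (q + (s-j))) := by
      intro j hj
      rw [Finset.mem_range] at hj
      rw [show d - (q+s+1) + (j+1) = d - (q + (s-j)) from by omega]
    rw [Finset.sum_congr rfl hre] at h0
    linear_combination h0
  have hMall : ∀ e : ℕ, e ≤ d → M e = w (d - e) := by
    intro e
    induction e using Nat.strong_induction_on with
    | _ e ih =>
      intro he
      by_cases hes : e ≤ s
      · exact hMlow e hes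
      · have hq : e = (e - s - 1) + s + 1 := by omega
        have hqlt : e - s - 1 < r + α := by omega
        rw [hq, hrecM (e - s - 1), hrecw (e - s - 1) hqlt]
        congr 1
        refine Finset.sum_congr rfl fun j hj => ?_
        rw [Finset.mem_range] at hj
        rw [ih (e - s - 1 + (s - j)) (by omega) (by omega)]
  -- final assembly
  refine ⟨lam, fun i => (1, t i), ?_⟩
  apply MvPolynomial.ext
  intro ξ
  rw [coeff_F a b r s α ξ, coeff_rep lam _ ξ]
  by_cases hsum : ξ 0 + ξ 1 = d
  · simp only [if_pos hsum, one_pow]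
    have hstep : ∑ i, lam i * ((d.choose (ξ 0) : ℂ) * 1 * t i ^ (ξ 1))
        = (d.choose (ξ 0) : ℂ) * M (ξ 1) := by
      simp only [hM]
      rw [Finset.mul_sum]
      exact Finset.sum_congr rfl fun i _ => by ring
    rw [hstep, hMall (ξ 1) (by omega), show d - ξ 1 = ξ 0 from by omega]
    simp only [hw]
    by_cases h1 : ξ 0 = r
    · rw [if_pos ⟨h1, by omega⟩, if_neg (fun hcon => by omega), if_pos h1, add_zero, h1, hAn]
      rw [mul_comm, div_mul_cancel₀ _ (hch r (by omega))]
    · by_cases h2 : ξ 0 = r + α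
      · rw [if_neg (fun hcon => h1 hcon.1), if_pos ⟨h2, by omega⟩, if_neg (by omega),
          if_pos h2, zero_add, h2, hBn]
        rw [mul_comm, div_mul_cancel₀ _ (hch (r+α) (by omega))]
      · rw [if_neg (fun hcon => h1 hcon.1), if_neg (fun hcon => h2 hcon.1),
          if_neg h1, if_neg h2]
        simp
  · simp only [if_neg hsum, mul_zero, Finset.sum_const_zero]
    rw [if_neg (fun hcon => hsum (by omega)), if_neg (fun hcon => hsum (by omega))]
    simp

theorem waring_rank_binomial_case1 (a b : ℂ) (ha : a ≠ 0) (hb : b ≠ 0)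
    (r s α : ℕ) (hrs : r ≤ s) (hα : 1 ≤ α) (h : r + α ≤ s) :
    waringRank (r + s + α)
      (C a * X (0 : Fin 2) ^ r * X 1 ^ (s + α) + C b * X (0 : Fin 2) ^ (r + α) * X 1 ^ s)
      = s + 1 := by
  obtain ⟨A, cc, hFrep⟩ := upper_bound a b ha hb r s α hα h
  rw [waringRank]
  have hmem : (s + 1) ∈ {k | ∃ (A : Fin k → ℂ) (c : Fin k → ℂ × ℂ),
      (C a * X (0 : Fin 2) ^ r * X 1 ^ (s + α) + C b * X (0 : Fin 2) ^ (r + α) * X 1 ^ s)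
        = ∑ i, C (A i) * lin (c i) ^ (r + s + α)} := ⟨A, cc, hFrep⟩
  refine le_antisymm (Nat.sInf_le hmem) ?_
  by_contra hlt
  push_neg at hlt
  have hinf := Nat.sInf_mem (⟨s + 1, hmem⟩ : Set.Nonempty _)
  rw [Set.mem_setOf_eq] at hinf
  obtain ⟨A', cc', hF'⟩ := hinf
  exact lower_bound a b ha hb r s α
    (sInf {k | ∃ (A : Fin k → ℂ) (c : Fin k → ℂ × ℂ),
      (C a * X (0 : Fin 2) ^ r * X 1 ^ (s + α) + C b * X (0 : Fin 2) ^ (r + α) * X 1 ^ s)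
        = ∑ i, C (A i) * lin (c i) ^ (r + s + α)})
    hα h (Nat.lt_succ_iff.mp hlt) A' cc' hF'
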